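/- Let 𝒜 be a p-S-ring over a finite abelian p-group H with an 𝒜-subgroup K of index p, and let T be a basic set of 𝒜. If |O(𝒜) ∩ K| · |T| > |H|/p, then O(𝒜) ∩ rad(T) is non-trivial. -/

import Mathlib

open scoped Classical Pointwise

noncomputable section

variable {H : Type*}

/-- The simple quantity of a subset `T` of `H` in the group algebra `ℚ H`. -/
def simpleQ [Group H] [Fintype H] (T : Set H) : MonoidAlgebra ℚ H :=
  ∑ h ∈ T.toFinset, MonoidAlgebra.single h (1 : ℚ)

/-- An S-ring over a finite group `H`: a partition of `H` containing `{1}`,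
closed under inversion, whose simple quantities span a subalgebra of `ℚ H`. -/
structure SRing (H : Type*) [Group H] [Fintype H] where
  basicSets : Set (Set H)
  exists_unique_mem : ∀ h : H, ∃! T, T ∈ basicSets ∧ h ∈ T
  nonempty_of_mem : ∀ T ∈ basicSets, T.Nonempty
  one_mem : ({1} : Set H) ∈ basicSets
  inv_mem : ∀ T ∈ basicSets, T⁻¹ ∈ basicSets
  mul_mem : ∀ T ∈ basicSets, ∀ S ∈ basicSets,
    simpleQ T * simpleQ S ∈ Submodule.span ℚ (simpleQ '' basicSets)

namespace SRing

variable [Group H] [Fintype H]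

/-- The underlying ℚ-subspace of the S-ring. -/
def carrier (A : SRing H) : Submodule ℚ (MonoidAlgebra ℚ H) :=
  Submodule.span ℚ (simpleQ '' A.basicSets)

/-- `S` is an `𝒜`-subset: its simple quantity lies in `𝒜`. -/
def IsSubset (A : SRing H) (S : Set H) : Prop := simpleQ S ∈ A.carrier

/-- The thin radical of the S-ring. -/
def thin (A : SRing H) : Set H := {g | ({g} : Set H) ∈ A.basicSets}

end SRing

/-- The radical of a subset `S`: elements `h` with `hS = Sh = S`. -/
def radSet [Group H] (S : Set H) : Set H := {h | {h} * S = S ∧ S * {h} = S}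

/-- The automorphism group of the Cayley digraph `Cay(H, T)`. -/
def cayAut [Group H] (T : Set H) : Subgroup (Equiv.Perm H) where
  carrier := {g | ∀ x y : H, y * x⁻¹ ∈ T ↔ g y * (g x)⁻¹ ∈ T}
  one_mem' := by intro x y; simp
  mul_mem' := by
    intro a b ha hb x y
    simpa [Equiv.Perm.mul_apply] using (hb x y).trans (ha (b x) (b y))
  inv_mem' := by
    intro a ha x y
    simpa using (ha (a⁻¹ x) (a⁻¹ y)).symm

/-- The automorphism group of an S-ring. -/
def SRing.aut [Group H] [Fintype H] (A : SRing H) : Subgroup (Equiv.Perm H) :=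
  ⨅ T ∈ A.basicSets, cayAut T

/-- The right regular representation of `H` inside `Sym(H)`. -/
def rightRegular (H : Type*) [Group H] : Subgroup (Equiv.Perm H) where
  carrier := Set.range fun h : H => Equiv.mulRight h
  one_mem' := ⟨1, by ext x; simp⟩
  mul_mem' := by
    rintro _ _ ⟨a, rfl⟩ ⟨b, rfl⟩
    exact ⟨b * a, by ext x; simp [mul_assoc]⟩
  inv_mem' := by
    rintro _ ⟨a, rfl⟩
    exact ⟨a⁻¹, by ext x; simp⟩

/-- The orbit of `h` under the stabilizer of the identity in `G ≤ Sym(H)`. -/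
def orbitOfStab [Group H] (G : Subgroup (Equiv.Perm H)) (h : H) : Set H :=
  {x | ∃ g ∈ G, g 1 = 1 ∧ g h = x}

/-- A Schurian S-ring: its basic sets are the orbits of the identity-stabilizer
of some overgroup of the right regular representation. -/
def SRing.IsSchurian [Group H] [Fintype H] (A : SRing H) : Prop :=
  ∃ G : Subgroup (Equiv.Perm H), rightRegular H ≤ G ∧
    A.basicSets = {S | ∃ h : H, S = orbitOfStab G h}

/-- A p-S-ring: all basic sets have `p`-power size. -/
def SRing.IsPSRing [Group H] [Fintype H] (A : SRing H) (p : ℕ) : Prop :=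
  ∀ T ∈ A.basicSets, ∃ k : ℕ, Nat.card T = p ^ k

/-- A decomposable S-ring: a nontrivial `E/F`-wreath product. -/
def SRing.Decomposable [Group H] [Fintype H] (A : SRing H) : Prop :=
  ∃ E F : Subgroup H, F.Normal ∧ F ≤ E ∧ E ≠ ⊤ ∧ F ≠ ⊥ ∧
    A.IsSubset ↑E ∧ A.IsSubset ↑F ∧
    ∀ T ∈ A.basicSets, T ⊆ ((E : Set H))ᶜ → (F : Set H) ⊆ radSet T

/-- The 2-closure of a permutation group `G ≤ Sym(Ω)`: all permutations
preserving every `G`-orbit on `Ω × Ω`. -/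
def twoClosure {Ω : Type*} (G : Subgroup (Equiv.Perm Ω)) : Subgroup (Equiv.Perm Ω) where
  carrier := {γ | ∀ a b : Ω, ∃ g ∈ G, g a = γ a ∧ g b = γ b}
  one_mem' := fun a b => ⟨1, G.one_mem, rfl, rfl⟩
  mul_mem' := by
    intro γ δ hγ hδ a b
    obtain ⟨g, hg, hga, hgb⟩ := hδ a b
    obtain ⟨g', hg', hg'a, hg'b⟩ := hγ (δ a) (δ b)
    exact ⟨g' * g, G.mul_mem hg' hg, by simp [Equiv.Perm.mul_apply, hga, hg'a],
      by simp [Equiv.Perm.mul_apply, hgb, hg'b]⟩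
  inv_mem' := by
    intro γ hγ a b
    obtain ⟨g, hg, hga, hgb⟩ := hγ (γ⁻¹ a) (γ⁻¹ b)
    have h1 : g (γ⁻¹ a) = a := by rw [hga]; simp
    have h2 : g (γ⁻¹ b) = b := by rw [hgb]; simp
    refine ⟨g⁻¹, G.inv_mem hg, ?_, ?_⟩
    · exact g.injective (by rw [h1]; simp)
    · exact g.injective (by rw [h2]; simp)


section Aux
variable [CommGroup H] [Fintype H]

lemma simpleQ_apply (T : Set H) (h : H) :
    (simpleQ T).coeff h = if h ∈ T then (1:ℚ) else 0 := by
  classical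
  rw [simpleQ, MonoidAlgebra.coeff_sum, Finsupp.finset_sum_apply]
  simp only [MonoidAlgebra.coeff_single, Finsupp.single_apply]
  rw [Finset.sum_ite_eq' T.toFinset h (fun _ => (1:ℚ))]
  simp [Set.mem_toFinset]

lemma basic_eq_of_mem (A : SRing H) {B C : Set H} (hB : B ∈ A.basicSets)
    (hC : C ∈ A.basicSets) {x : H} (hxB : x ∈ B) (hxC : x ∈ C) : B = C := by
  obtain ⟨D, -, hD⟩ := A.exists_unique_mem x
  rw [hD B ⟨hB, hxB⟩, hD C ⟨hC, hxC⟩]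

lemma carrier_const (A : SRing H) {x : MonoidAlgebra ℚ H} (hx : x ∈ A.carrier)
    {B : Set H} (hB : B ∈ A.basicSets) {a b : H} (ha : a ∈ B) (hb : b ∈ B) :
    x.coeff a = x.coeff b := by
  induction hx using Submodule.span_induction with
  | mem y hy =>
    obtain ⟨T, hT, rfl⟩ := hy
    rw [simpleQ_apply, simpleQ_apply]
    by_cases hTa : a ∈ T
    · rw [if_pos hTa, if_pos (basic_eq_of_mem A hB hT ha hTa ▸ hb)]
    · rw [if_neg hTa, if_neg (fun hTb => hTa (basic_eq_of_mem A hB hT hb hTb ▸ ha))]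
  | zero => rfl
  | add x y hx hy ihx ihy => rw [MonoidAlgebra.coeff_add, Finsupp.add_apply, Finsupp.add_apply, ihx, ihy]
  | smul c x hx ihx => rw [MonoidAlgebra.coeff_smul_apply, MonoidAlgebra.coeff_smul_apply, ihx]

lemma subset_of_mem (A : SRing H) {S : Set H} (hS : A.IsSubset S)
    {B : Set H} (hB : B ∈ A.basicSets) {x : H} (hxB : x ∈ B) (hxS : x ∈ S) :
    B ⊆ S := by
  intro y hy
  have h := carrier_const A hS hB hxB hy
  rw [simpleQ_apply, simpleQ_apply, if_pos hxS] at h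
  by_contra hyS
  rw [if_neg hyS] at h
  norm_num at h

lemma carrier_mul_mem (A : SRing H) {x y : MonoidAlgebra ℚ H}
    (hx : x ∈ A.carrier) (hy : y ∈ A.carrier) : x * y ∈ A.carrier := by
  have hle : A.carrier * A.carrier ≤ A.carrier := by
    rw [SRing.carrier, Submodule.span_mul_span]
    refine Submodule.span_le.mpr ?_
    rintro _ ⟨_, ⟨T, hT, rfl⟩, _, ⟨S, hS, rfl⟩, rfl⟩
    exact A.mul_mem T hT S hS
  exact hle (Submodule.mul_mem_mul hx hy)

lemma simpleQ_basic_mem (A : SRing H) {T : Set H} (hT : T ∈ A.basicSets) :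
    simpleQ T ∈ A.carrier :=
  Submodule.subset_span ⟨T, hT, rfl⟩

lemma simpleQ_singleton (g : H) : simpleQ ({g} : Set H) = MonoidAlgebra.single g 1 := by
  rw [simpleQ]
  simp

lemma simpleQ_singleton_mul (g : H) (S : Set H) :
    simpleQ ({g} * S) = simpleQ ({g} : Set H) * simpleQ S := by
  classical
  rw [simpleQ_singleton]
  refine MonoidAlgebra.coeff_injective (Finsupp.ext fun h => ?_)
  rw [MonoidAlgebra.coeff_single_mul_apply, simpleQ_apply, simpleQ_apply, one_mul]
  have : h ∈ {g} * S ↔ g⁻¹ * h ∈ S := by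
    constructor
    · rintro ⟨a, rfl, t, ht, rfl⟩
      simpa using ht
    · intro hmem
      exact ⟨g, rfl, g⁻¹ * h, hmem, by group⟩
  by_cases hc : g⁻¹ * h ∈ S
  · rw [if_pos hc, if_pos (this.mpr hc)]
  · rw [if_neg hc, if_neg (fun hm => hc (this.mp hm))]

end Aux
section Aux2
variable [CommGroup H] [Fintype H]

lemma thin_inv_mem (A : SRing H) {g : H} (hg : g ∈ A.thin) : g⁻¹ ∈ A.thin := by
  have := A.inv_mem {g} hg
  rwa [Set.inv_singleton] at this

lemma thin_translate (A : SRing H) {g : H} (hg : g ∈ A.thin) {T : Set H}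
    (hT : T ∈ A.basicSets) : {g} * T ∈ A.basicSets := by
  have hginv : g⁻¹ ∈ A.thin := thin_inv_mem A hg
  have hgT : A.IsSubset ({g} * T) := by
    rw [SRing.IsSubset, simpleQ_singleton_mul]
    exact carrier_mul_mem A (simpleQ_basic_mem A hg) (simpleQ_basic_mem A hT)
  obtain ⟨t₀, ht₀⟩ := A.nonempty_of_mem T hT
  obtain ⟨B, ⟨hB, hmemB⟩, -⟩ := A.exists_unique_mem (g * t₀)
  have hgt₀ : g * t₀ ∈ {g} * T := ⟨g, rfl, t₀, ht₀, rfl⟩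
  have hBsub : B ⊆ {g} * T := subset_of_mem A hgT hB hmemB hgt₀
  have hcancel : ∀ (S : Set H) (a : H), {a⁻¹} * ({a} * S) = S := by
    intro S a
    rw [← mul_assoc, Set.singleton_mul_singleton, inv_mul_cancel, Set.singleton_one, one_mul]
  have hsub2 : {g⁻¹} * B ⊆ T := by
    have := Set.mul_subset_mul_left (s := ({g⁻¹} : Set H)) hBsub
    rwa [hcancel T g] at this
  have hinvB : A.IsSubset ({g⁻¹} * B) := by
    rw [SRing.IsSubset, simpleQ_singleton_mul]
    exact carrier_mul_mem A (simpleQ_basic_mem A hginv) (simpleQ_basic_mem A hB)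
  have ht₀' : t₀ ∈ {g⁻¹} * B := ⟨g⁻¹, rfl, g * t₀, hmemB, by group⟩
  have hsub3 : T ⊆ {g⁻¹} * B := subset_of_mem A hinvB hT ht₀ ht₀'
  have hTeq : T = {g⁻¹} * B := le_antisymm hsub3 hsub2
  have : {g} * T = B := by
    rw [hTeq]
    have := hcancel B g⁻¹
    rwa [inv_inv] at this
  rwa [this]

lemma thin_mul_mem (A : SRing H) {g h : H} (hg : g ∈ A.thin) (hh : h ∈ A.thin) :
    g * h ∈ A.thin := by
  have := thin_translate A hg hh
  rwa [Set.singleton_mul_singleton] at this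

lemma mul_apply_count (T : Set H) (K : Subgroup H) (h : H) :
    (simpleQ T * simpleQ (K : Set H)).coeff h
      = ((T.toFinset.filter fun s => s⁻¹ * h ∈ K).card : ℚ) := by
  classical
  rw [simpleQ, simpleQ, Finset.sum_mul_sum]
  simp only [MonoidAlgebra.single_mul_single, one_mul]
  rw [MonoidAlgebra.coeff_sum, Finsupp.finset_sum_apply]
  have hinner : ∀ t : H, (∑ k ∈ (K : Set H).toFinset,
      MonoidAlgebra.single (t * k) (1:ℚ)).coeff h = if t⁻¹ * h ∈ K then (1:ℚ) else 0 := by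
    intro t
    rw [MonoidAlgebra.coeff_sum, Finsupp.finset_sum_apply]
    simp only [MonoidAlgebra.coeff_single, Finsupp.single_apply]
    have : ∀ k : H, (t * k = h) ↔ (k = t⁻¹ * h) := by
      intro k; constructor
      · intro e; rw [← e]; group
      · rintro rfl; group
    rw [Finset.sum_congr rfl (fun k _ => by rw [if_congr (this k) rfl rfl]),
      Finset.sum_ite_eq' (K : Set H).toFinset (t⁻¹ * h) (fun _ => (1:ℚ))]
    simp [Set.mem_toFinset]
  rw [Finset.sum_congr rfl (fun t _ => hinner t), Finset.sum_boole]

lemma coset_count (A : SRing H) {K : Subgroup H} (hK : A.IsSubset ↑K)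
    {T : Set H} (hT : T ∈ A.basicSets) {t t' : H} (ht : t ∈ T) (ht' : t' ∈ T) :
    (T.toFinset.filter fun s => s⁻¹ * t ∈ K).card
      = (T.toFinset.filter fun s => s⁻¹ * t' ∈ K).card := by
  have hx : simpleQ T * simpleQ (K : Set H) ∈ A.carrier :=
    carrier_mul_mem A (simpleQ_basic_mem A hT) hK
  have h := carrier_const A hx hT ht ht'
  rw [mul_apply_count, mul_apply_count] at h
  exact_mod_cast h

end Aux2
section Aux3
variable [CommGroup H] [Fintype H]

lemma mem_same_coset {p : ℕ} (hp : p.Prime) (A : SRing H) (hA : A.IsPSRing p)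
    {K : Subgroup H} (hK : A.IsSubset ↑K) (hidx : K.index = p)
    {T : Set H} (hT : T ∈ A.basicSets) {t t' : H} (ht : t ∈ T) (ht' : t' ∈ T) :
    t⁻¹ * t' ∈ K := by
  classical
  by_cases hTK : ∃ s ∈ T, s ∈ K
  · obtain ⟨s, hsT, hsK⟩ := hTK
    have hsub : T ⊆ (K : Set H) := subset_of_mem A hK hT hsT hsK
    exact K.mul_mem (K.inv_mem (hsub ht)) (hsub ht')
  · push_neg at hTK
    set f : H → H ⧸ K := QuotientGroup.mk with hf
    set img := T.toFinset.image f with himg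
    set c := (T.toFinset.filter fun s => s⁻¹ * t ∈ K).card with hc
    have hfib : ∀ q ∈ img, (T.toFinset.filter fun s => f s = q).card = c := by
      intro q hq
      obtain ⟨s₀, hs₀, rfl⟩ := Finset.mem_image.mp hq
      have heq : (T.toFinset.filter fun s => f s = f s₀)
          = (T.toFinset.filter fun s => s⁻¹ * s₀ ∈ K) := by
        apply Finset.filter_congr
        intro s _
        exact QuotientGroup.eq
      rw [heq, hc]
      exact coset_count A hK hT (Set.mem_toFinset.mp hs₀) ht
    have hcardT : T.toFinset.card = img.card * c := by
      rw [Finset.card_eq_sum_card_fiberwise (f := f) (t := img)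
        (fun x hx => Finset.mem_image_of_mem f hx)]
      rw [Finset.sum_congr rfl hfib, Finset.sum_const, smul_eq_mul]
    obtain ⟨k, hk⟩ := hA T hT
    have hTk : T.toFinset.card = p ^ k := by
      rw [← Set.ncard_eq_toFinset_card', ← Nat.card_coe_set_eq, hk]
    have hdvd : img.card ∣ p ^ k := ⟨c, by rw [← hcardT, hTk]⟩
    have hlt : img.card < p := by
      have hsubset : img ⊆ Finset.univ.erase (1 : H ⧸ K) := by
        intro q hq
        obtain ⟨s₀, hs₀, rfl⟩ := Finset.mem_image.mp hq
        refine Finset.mem_erase.mpr ⟨?_, Finset.mem_univ _⟩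
        intro h1
        exact hTK s₀ (Set.mem_toFinset.mp hs₀) ((QuotientGroup.eq_one_iff s₀).mp h1)
      have hcq : Fintype.card (H ⧸ K) = p := by
        rw [← Nat.card_eq_fintype_card, ← Subgroup.index, hidx]
      calc img.card ≤ (Finset.univ.erase (1 : H ⧸ K)).card := Finset.card_le_card hsubset
        _ < Finset.univ.card := Finset.card_erase_lt_of_mem (Finset.mem_univ _)
        _ = p := by rw [Finset.card_univ, hcq]
    have him1 : img.card = 1 := by
      obtain ⟨j, hj, hjm⟩ := (Nat.dvd_prime_pow hp).mp hdvd
      rcases Nat.eq_zero_or_pos j with rfl | hjpos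
      · simpa using hjm
      · exfalso
        have : p ≤ p ^ j := Nat.le_self_pow (by omega) p
        omega
    have hft : f t ∈ img := Finset.mem_image_of_mem f (Set.mem_toFinset.mpr ht)
    have hft' : f t' ∈ img := Finset.mem_image_of_mem f (Set.mem_toFinset.mpr ht')
    have : f t = f t' := Finset.card_le_one.mp (le_of_eq him1) _ hft _ hft'
    exact QuotientGroup.eq.mp this

end Aux3
/-- a counting condition forcing a non-trivial thin element in
the radical of a basic set. -/
theorem stmt11 {H : Type*} [CommGroup H] [Fintype H] {p : ℕ} (hp : p.Prime)
    (hpH : IsPGroup p H) (A : SRing H) (hA : A.IsPSRing p)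
    (K : Subgroup H) (hK : A.IsSubset ↑K) (hidx : K.index = p)
    (T : Set H) (hT : T ∈ A.basicSets)
    (hbig : Nat.card ↥(A.thin ∩ (K : Set H)) * Nat.card T > Fintype.card H / p) :
    ∃ g : H, g ≠ 1 ∧ g ∈ A.thin ∧ g ∈ radSet T := by
  classical
  by_contra hcon
  push_neg at hcon
  have hrad : ∀ g ∈ A.thin, {g} * T = T → g = 1 := by
    intro g hg hgT
    by_contra h1
    exact (hcon g h1 hg) ⟨hgT, by rw [mul_comm]; exact hgT⟩
  obtain ⟨t₀, ht₀⟩ := A.nonempty_of_mem T hT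
  set Φ : ↥(A.thin ∩ (K : Set H)) × ↥T → ↥(K : Set H) :=
    fun x => ⟨t₀⁻¹ * ((x.1 : H) * (x.2 : H)), by
      obtain ⟨⟨g, hg⟩, ⟨t, ht⟩⟩ := x
      have hgK : g ∈ K := hg.2
      have htK : t₀⁻¹ * t ∈ K := mem_same_coset hp A hA hK hidx hT ht₀ ht
      have : t₀⁻¹ * (g * t) = g * (t₀⁻¹ * t) := mul_left_comm t₀⁻¹ g t
      rw [SetLike.mem_coe, this]
      exact K.mul_mem hgK htK⟩ with hΦ
  have hinj : Function.Injective Φ := by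
    rintro ⟨⟨g₁, hg₁⟩, ⟨t₁, ht₁⟩⟩ ⟨⟨g₂, hg₂⟩, ⟨t₂, ht₂⟩⟩ hxy
    have he : g₁ * t₁ = g₂ * t₂ := by
      have := Subtype.ext_iff.mp hxy
      simp only [hΦ] at this
      exact mul_left_cancel this
    have hB₁ : {g₁} * T ∈ A.basicSets := thin_translate A hg₁.1 hT
    have hB₂ : {g₂} * T ∈ A.basicSets := thin_translate A hg₂.1 hT
    have hm₁ : g₁ * t₁ ∈ {g₁} * T := ⟨g₁, rfl, t₁, ht₁, rfl⟩
    have hm₂ : g₁ * t₁ ∈ {g₂} * T := he ▸ ⟨g₂, rfl, t₂, ht₂, rfl⟩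
    have hBeq : {g₁} * T = {g₂} * T := basic_eq_of_mem A hB₁ hB₂ hm₁ hm₂
    have hcan : {g₂⁻¹} * ({g₂} * T) = T := by
      rw [← mul_assoc, Set.singleton_mul_singleton, inv_mul_cancel,
        Set.singleton_one, one_mul]
    have hgg : {g₂⁻¹ * g₁} * T = T := by
      rw [← Set.singleton_mul_singleton, mul_assoc, hBeq, hcan]
    have hthin : g₂⁻¹ * g₁ ∈ A.thin := thin_mul_mem A (thin_inv_mem A hg₂.1) hg₁.1
    have h1 : g₂⁻¹ * g₁ = 1 := hrad _ hthin hgg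
    have hg : g₁ = g₂ := (inv_mul_eq_one.mp h1).symm
    rw [hg] at he
    exact Prod.ext (Subtype.ext hg) (Subtype.ext (mul_left_cancel he))
  have hle := Nat.card_le_card_of_injective Φ hinj
  rw [Nat.card_prod] at hle
  have hKcard : Nat.card ↥(K : Set H) = Nat.card ↥K := rfl
  have hHp : Fintype.card H / p = Nat.card ↥K := by
    have h := Subgroup.card_mul_index K
    rw [hidx, show (Nat.card H) = Fintype.card H from Nat.card_eq_fintype_card] at h
    rw [← h, Nat.mul_div_cancel _ hp.pos]
  rw [hHp] at hbig
  rw [hKcard] at hle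
  omega
end
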